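/- Let k ∈ (0, 1/2), b = √(1 − k²), p = bi, A = √((1 − 4k²)/(1 − k²)), λ = k²/4, μ* = −p·i/√3 = b/√3, and r = μ*A/(k + μ*). Set η₁ = k(x − py − t), η₂ = k(x + py − t), ι̃₁(t,x,y) = r e^{η₁/2} + e^{−η₁/2}, and ι̃₂(t,x,y) = e^{(η₁+η₂)/2} + e^{−(η₁+η₂)/2} + A( e^{(η₁−η₂)/2} + e^{(η₂−η₁)/2} ) = 2( cosh(k(x − t)) + A cos(k b y) ). Then the Bäcklund transformation relations hold on ℝ³: (Dₓ² + μ*Dₓ + (i/√3)Dᵧ) ι̃₁·ι̃₂ = λ ι̃₁ ι̃₂ and (Dₜ + 3λDₓ − √3 μ* i Dᵧ + Dₓ³ − √3 i DₓDᵧ) ι̃₁·ι̃₂ − (3k²μ*/4) ι̃₁ ι̃₂ = 0. -/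

import Mathlib

open Complex



open Complex

/-- Hirota bilinear derivative `Dₜ^l Dₓ^m Dᵧ^n f·g` for functions of `(t,x,y) ∈ ℝ³`. -/
noncomputable def hirota3 (l m n : ℕ) (f g : ℝ × ℝ × ℝ → ℂ) (p : ℝ × ℝ × ℝ) : ℂ :=
  iteratedDeriv l (fun c =>
    iteratedDeriv m (fun a =>
      iteratedDeriv n (fun b =>
        f (p.1 + c, p.2.1 + a, p.2.2 + b) * g (p.1 - c, p.2.1 - a, p.2.2 - b)) 0) 0) 0

lemma hasDerivAt_cexp_lin (C d : ℂ) (s : ℝ) :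
    HasDerivAt (fun s : ℝ => C * Complex.exp (d * s)) (C * d * Complex.exp (d * s)) s := by
  have h1 : HasDerivAt (fun s : ℝ => (d * s : ℂ)) d s := by
    simpa using ((hasDerivAt_id s).ofReal_comp.const_mul d)
  have := (h1.cexp).const_mul C
  simpa [mul_comm, mul_assoc, mul_left_comm] using this

lemma itd_exp_sum {ι : Type*} (S : Finset ι) (n : ℕ) (C d : ι → ℂ) :
    iteratedDeriv n (fun s : ℝ => ∑ i ∈ S, C i * Complex.exp (d i * s))
      = fun s : ℝ => ∑ i ∈ S, C i * d i ^ n * Complex.exp (d i * s) := by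
  induction n generalizing C with
  | zero => simp
  | succ n ih =>
    rw [iteratedDeriv_succ']
    have hd : (deriv fun s : ℝ => ∑ i ∈ S, C i * Complex.exp (d i * s))
        = fun s : ℝ => ∑ i ∈ S, (C i * d i) * Complex.exp (d i * s) := by
      funext s
      exact (HasDerivAt.fun_sum fun i _ => hasDerivAt_cexp_lin (C i) (d i) s).deriv
    rw [hd, ih (fun i => C i * d i)]
    funext s
    exact Finset.sum_congr rfl fun i _ => by ring

lemma itd_exp_sum_eval {ι : Type*} (S : Finset ι) (n : ℕ) (C d : ι → ℂ) :
    iteratedDeriv n (fun s : ℝ => ∑ i ∈ S, C i * Complex.exp (d i * s)) 0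
      = ∑ i ∈ S, C i * d i ^ n := by
  rw [itd_exp_sum]; simp

lemma exp_split {A E F : ℂ} (h : A = E + F) :
    Complex.exp A = Complex.exp E * Complex.exp F := by
  rw [h, Complex.exp_add]

lemma hirota3_exp {ι κ : Type*} (Sf : Finset ι) (Sg : Finset κ)
    (C u v w : ι → ℂ) (D U V W : κ → ℂ) (l m n : ℕ) (q : ℝ × ℝ × ℝ) :
    hirota3 l m n
      (fun p => ∑ i ∈ Sf, C i * Complex.exp (u i * p.1 + v i * p.2.1 + w i * p.2.2))
      (fun p => ∑ j ∈ Sg, D j * Complex.exp (U j * p.1 + V j * p.2.1 + W j * p.2.2)) q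
    = ∑ i ∈ Sf, ∑ j ∈ Sg,
        C i * D j * (u i - U j) ^ l * (v i - V j) ^ m * (w i - W j) ^ n *
          Complex.exp ((u i + U j) * q.1 + (v i + V j) * q.2.1 + (w i + W j) * q.2.2) := by
  obtain ⟨t, x, y⟩ := q
  unfold hirota3
  simp only
  have h1 : ∀ c a : ℝ,
      iteratedDeriv n (fun b : ℝ =>
        (∑ i ∈ Sf, C i * Complex.exp (u i * ((t + c : ℝ) : ℂ) + v i * ((x + a : ℝ) : ℂ)
            + w i * ((y + b : ℝ) : ℂ))) *
        (∑ j ∈ Sg, D j * Complex.exp (U j * ((t - c : ℝ) : ℂ) + V j * ((x - a : ℝ) : ℂ)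
            + W j * ((y - b : ℝ) : ℂ)))) 0
      = ∑ p ∈ Sf ×ˢ Sg,
          (C p.1 * D p.2 *
            Complex.exp ((u p.1 * ((t + c : ℝ) : ℂ) + v p.1 * ((x + a : ℝ) : ℂ) + w p.1 * (y : ℂ))
              + (U p.2 * ((t - c : ℝ) : ℂ) + V p.2 * ((x - a : ℝ) : ℂ) + W p.2 * (y : ℂ))))
            * (w p.1 - W p.2) ^ n := by
    intro c a
    have hfun : (fun b : ℝ =>
        (∑ i ∈ Sf, C i * Complex.exp (u i * ((t + c : ℝ) : ℂ) + v i * ((x + a : ℝ) : ℂ)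
            + w i * ((y + b : ℝ) : ℂ))) *
        (∑ j ∈ Sg, D j * Complex.exp (U j * ((t - c : ℝ) : ℂ) + V j * ((x - a : ℝ) : ℂ)
            + W j * ((y - b : ℝ) : ℂ))))
        = fun b : ℝ => ∑ p ∈ Sf ×ˢ Sg,
            (C p.1 * D p.2 *
              Complex.exp ((u p.1 * ((t + c : ℝ) : ℂ) + v p.1 * ((x + a : ℝ) : ℂ) + w p.1 * (y : ℂ))
                + (U p.2 * ((t - c : ℝ) : ℂ) + V p.2 * ((x - a : ℝ) : ℂ) + W p.2 * (y : ℂ))))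
              * Complex.exp ((w p.1 - W p.2) * b) := by
      funext b
      rw [Finset.sum_mul_sum, ← Finset.sum_product']
      refine Finset.sum_congr rfl fun p _ => ?_
      have e1 : Complex.exp (u p.1 * ((t + c : ℝ) : ℂ) + v p.1 * ((x + a : ℝ) : ℂ)
            + w p.1 * ((y + b : ℝ) : ℂ))
          = Complex.exp (u p.1 * ((t + c : ℝ) : ℂ) + v p.1 * ((x + a : ℝ) : ℂ) + w p.1 * (y : ℂ))
            * Complex.exp (w p.1 * b) := exp_split (by push_cast; ring)
      have e2 : Complex.exp (U p.2 * ((t - c : ℝ) : ℂ) + V p.2 * ((x - a : ℝ) : ℂ)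
            + W p.2 * ((y - b : ℝ) : ℂ))
          = Complex.exp (U p.2 * ((t - c : ℝ) : ℂ) + V p.2 * ((x - a : ℝ) : ℂ) + W p.2 * (y : ℂ))
            * Complex.exp (-(W p.2) * b) := exp_split (by push_cast; ring)
      have e3 : Complex.exp ((u p.1 * ((t + c : ℝ) : ℂ) + v p.1 * ((x + a : ℝ) : ℂ) + w p.1 * (y : ℂ))
            + (U p.2 * ((t - c : ℝ) : ℂ) + V p.2 * ((x - a : ℝ) : ℂ) + W p.2 * (y : ℂ)))
          = Complex.exp (u p.1 * ((t + c : ℝ) : ℂ) + v p.1 * ((x + a : ℝ) : ℂ) + w p.1 * (y : ℂ))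
            * Complex.exp ((U p.2 * ((t - c : ℝ) : ℂ) + V p.2 * ((x - a : ℝ) : ℂ) + W p.2 * (y : ℂ))) :=
        exp_split rfl
      have e4 : Complex.exp ((w p.1 - W p.2) * (b : ℂ))
          = Complex.exp (w p.1 * b) * Complex.exp (-(W p.2) * b) := exp_split (by ring)
      rw [e1, e2, e3, e4]; ring
    rw [hfun, itd_exp_sum_eval]
  simp only [h1]
  have h2 : ∀ c : ℝ,
      iteratedDeriv m (fun a : ℝ => ∑ p ∈ Sf ×ˢ Sg,
          (C p.1 * D p.2 *
            Complex.exp ((u p.1 * ((t + c : ℝ) : ℂ) + v p.1 * ((x + a : ℝ) : ℂ) + w p.1 * (y : ℂ))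
              + (U p.2 * ((t - c : ℝ) : ℂ) + V p.2 * ((x - a : ℝ) : ℂ) + W p.2 * (y : ℂ))))
            * (w p.1 - W p.2) ^ n) 0
      = ∑ p ∈ Sf ×ˢ Sg,
          (C p.1 * D p.2 * (w p.1 - W p.2) ^ n *
            Complex.exp ((u p.1 * ((t + c : ℝ) : ℂ) + v p.1 * (x : ℂ) + w p.1 * (y : ℂ))
              + (U p.2 * ((t - c : ℝ) : ℂ) + V p.2 * (x : ℂ) + W p.2 * (y : ℂ))))
            * (v p.1 - V p.2) ^ m := by
    intro c
    have hfun : (fun a : ℝ => ∑ p ∈ Sf ×ˢ Sg,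
          (C p.1 * D p.2 *
            Complex.exp ((u p.1 * ((t + c : ℝ) : ℂ) + v p.1 * ((x + a : ℝ) : ℂ) + w p.1 * (y : ℂ))
              + (U p.2 * ((t - c : ℝ) : ℂ) + V p.2 * ((x - a : ℝ) : ℂ) + W p.2 * (y : ℂ))))
            * (w p.1 - W p.2) ^ n)
        = fun a : ℝ => ∑ p ∈ Sf ×ˢ Sg,
            ((C p.1 * D p.2 * (w p.1 - W p.2) ^ n) *
              Complex.exp ((u p.1 * ((t + c : ℝ) : ℂ) + v p.1 * (x : ℂ) + w p.1 * (y : ℂ))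
                + (U p.2 * ((t - c : ℝ) : ℂ) + V p.2 * (x : ℂ) + W p.2 * (y : ℂ))))
              * Complex.exp ((v p.1 - V p.2) * a) := by
      funext a
      refine Finset.sum_congr rfl fun p _ => ?_
      have e1 : Complex.exp ((u p.1 * ((t + c : ℝ) : ℂ) + v p.1 * ((x + a : ℝ) : ℂ) + w p.1 * (y : ℂ))
            + (U p.2 * ((t - c : ℝ) : ℂ) + V p.2 * ((x - a : ℝ) : ℂ) + W p.2 * (y : ℂ)))
          = Complex.exp ((u p.1 * ((t + c : ℝ) : ℂ) + v p.1 * (x : ℂ) + w p.1 * (y : ℂ))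
              + (U p.2 * ((t - c : ℝ) : ℂ) + V p.2 * (x : ℂ) + W p.2 * (y : ℂ)))
            * Complex.exp ((v p.1 - V p.2) * a) := exp_split (by push_cast; ring)
      rw [e1]; ring
    rw [hfun, itd_exp_sum_eval]
  simp only [h2]
  have hfun : (fun c : ℝ => ∑ p ∈ Sf ×ˢ Sg,
        (C p.1 * D p.2 * (w p.1 - W p.2) ^ n *
          Complex.exp ((u p.1 * ((t + c : ℝ) : ℂ) + v p.1 * (x : ℂ) + w p.1 * (y : ℂ))
            + (U p.2 * ((t - c : ℝ) : ℂ) + V p.2 * (x : ℂ) + W p.2 * (y : ℂ))))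
          * (v p.1 - V p.2) ^ m)
      = fun c : ℝ => ∑ p ∈ Sf ×ˢ Sg,
          ((C p.1 * D p.2 * (w p.1 - W p.2) ^ n * (v p.1 - V p.2) ^ m) *
            Complex.exp ((u p.1 + U p.2) * (t : ℂ) + (v p.1 + V p.2) * (x : ℂ)
              + (w p.1 + W p.2) * (y : ℂ)))
            * Complex.exp ((u p.1 - U p.2) * c) := by
    funext c
    refine Finset.sum_congr rfl fun p _ => ?_
    have e1 : Complex.exp ((u p.1 * ((t + c : ℝ) : ℂ) + v p.1 * (x : ℂ) + w p.1 * (y : ℂ))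
          + (U p.2 * ((t - c : ℝ) : ℂ) + V p.2 * (x : ℂ) + W p.2 * (y : ℂ)))
        = Complex.exp ((u p.1 + U p.2) * (t : ℂ) + (v p.1 + V p.2) * (x : ℂ)
            + (w p.1 + W p.2) * (y : ℂ))
          * Complex.exp ((u p.1 - U p.2) * c) := exp_split (by push_cast; ring)
    rw [e1]; ring
  rw [hfun, itd_exp_sum_eval, ← Finset.sum_product']
  exact Finset.sum_congr rfl fun p _ => by ring


set_option maxHeartbeats 2000000 in
/-- The Bäcklund transformation relations between `ι̃₁` and `ι̃₂`. -/
theorem backlund_iota1_iota2 (k b A : ℝ) (hk : k ∈ Set.Ioo (0 : ℝ) (1/2))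
    (hb : b = Real.sqrt (1 - k ^ 2))
    (hA : A = Real.sqrt ((1 - 4 * k ^ 2) / (1 - k ^ 2)))
    (pc lam μs r : ℂ)
    (hpc : pc = (b : ℂ) * Complex.I)
    (hlam : lam = (k : ℂ) ^ 2 / 4)
    (hμs : μs = -(pc * Complex.I) / (Real.sqrt 3 : ℂ))
    (hr : r = μs * (A : ℂ) / ((k : ℂ) + μs))
    (η₁ η₂ : ℝ × ℝ × ℝ → ℂ)
    (hη₁ : η₁ = fun q => (k : ℂ) * ((q.2.1 : ℂ) - pc * (q.2.2 : ℂ) - (q.1 : ℂ)))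
    (hη₂ : η₂ = fun q => (k : ℂ) * ((q.2.1 : ℂ) + pc * (q.2.2 : ℂ) - (q.1 : ℂ)))
    (ι₁ ι₂ : ℝ × ℝ × ℝ → ℂ)
    (hι₁ : ι₁ = fun q => r * Complex.exp (η₁ q / 2) + Complex.exp (-(η₁ q) / 2))
    (hι₂ : ι₂ = fun q =>
      Complex.exp ((η₁ q + η₂ q) / 2) + Complex.exp (-(η₁ q + η₂ q) / 2)
        + (A : ℂ) * (Complex.exp ((η₁ q - η₂ q) / 2)
            + Complex.exp ((η₂ q - η₁ q) / 2))) :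
    (∀ q : ℝ × ℝ × ℝ,
      ι₂ q = 2 * (Complex.cosh ((k : ℂ) * ((q.2.1 : ℂ) - (q.1 : ℂ)))
        + (A : ℂ) * Complex.cos ((k : ℂ) * (b : ℂ) * (q.2.2 : ℂ)))) ∧
    (∀ q : ℝ × ℝ × ℝ,
      hirota3 0 2 0 ι₁ ι₂ q + μs * hirota3 0 1 0 ι₁ ι₂ q
        + I / (Real.sqrt 3 : ℂ) * hirota3 0 0 1 ι₁ ι₂ q
        = lam * (ι₁ q * ι₂ q)) ∧
    (∀ q : ℝ × ℝ × ℝ,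
      hirota3 1 0 0 ι₁ ι₂ q + 3 * lam * hirota3 0 1 0 ι₁ ι₂ q
        - (Real.sqrt 3 : ℂ) * μs * I * hirota3 0 0 1 ι₁ ι₂ q
        + hirota3 0 3 0 ι₁ ι₂ q
        - (Real.sqrt 3 : ℂ) * I * hirota3 0 1 1 ι₁ ι₂ q
        - 3 * (k : ℂ) ^ 2 * μs / 4 * (ι₁ q * ι₂ q) = 0) := by
  obtain ⟨hk0, hk2⟩ := hk
  have h1k : (0:ℝ) < 1 - k^2 := by nlinarith
  have h4k : (0:ℝ) < 1 - 4*k^2 := by nlinarith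
  have hbpos : 0 < b := by rw [hb]; exact Real.sqrt_pos.mpr h1k
  have hb2 : (b:ℝ)^2 = 1 - k^2 := by rw [hb]; exact Real.sq_sqrt h1k.le
  have hs3pos : (0:ℝ) < Real.sqrt 3 := Real.sqrt_pos.mpr (by norm_num)
  have hs3sq : (Real.sqrt 3:ℝ)^2 = 3 := Real.sq_sqrt (by norm_num)
  have hA2 : (A:ℝ)^2 * (1-k^2) = 1-4*k^2 := by
    rw [hA, Real.sq_sqrt (by positivity)]
    field_simp
  have hBc : (b:ℂ)^2 = 1 - (k:ℂ)^2 := by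
    have := congrArg (fun x : ℝ => (x:ℂ)) hb2; push_cast at this; exact this
  have hSc : ((Real.sqrt 3 : ℝ):ℂ)^2 = 3 := by
    have := congrArg (fun x : ℝ => (x:ℂ)) hs3sq; push_cast at this; exact this
  have hAc : (A:ℂ)^2 * (1 - (k:ℂ)^2) = 1 - 4*(k:ℂ)^2 := by
    have := congrArg (fun x : ℝ => (x:ℂ)) hA2; push_cast at this; exact this
  have hs3ne : ((Real.sqrt 3 : ℝ):ℂ) ≠ 0 := by exact_mod_cast hs3pos.ne'
  have hμ : μs = (b:ℂ) * ((Real.sqrt 3 : ℝ):ℂ) / 3 := by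
    rw [hμs, hpc]
    field_simp
    linear_combination (-3) * (b:ℂ) * Complex.I_sq - (b:ℂ) * hSc
  have hkμ : (k:ℂ) + μs ≠ 0 := by
    have he : ((k:ℂ) + μs) = ((k + b*Real.sqrt 3/3 : ℝ):ℂ) := by rw [hμ]; push_cast; ring
    rw [he]
    exact_mod_cast (by positivity : (0:ℝ) < k + b*Real.sqrt 3/3).ne'
  have hr4 : r * (3*(4*(k:ℂ)^2 - 1))
      = (b:ℂ)*((Real.sqrt 3:ℝ):ℂ)*(A:ℂ)*(3*(k:ℂ) - (b:ℂ)*((Real.sqrt 3:ℝ):ℂ)) := by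
    have hr3 : r * ((k:ℂ) + μs) = μs * (A:ℂ) := by rw [hr]; field_simp
    rw [hμ] at hr3
    linear_combination (3*(k:ℂ) - (b:ℂ)*((Real.sqrt 3:ℝ):ℂ)) * 3 * hr3
      + r*((Real.sqrt 3:ℝ):ℂ)^2*hBc + r*(1-(k:ℂ)^2)*hSc
  have hι₁S : ι₁ = fun p : ℝ × ℝ × ℝ => ∑ i : Fin 2,
      (![r, 1] i) * Complex.exp ((![-(k:ℂ)/2, (k:ℂ)/2] i) * p.1
        + (![(k:ℂ)/2, -(k:ℂ)/2] i) * p.2.1 + (![-((k:ℂ)*pc)/2, ((k:ℂ)*pc)/2] i) * p.2.2) := by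
    funext p
    rw [hι₁]
    simp only [hη₁, Fin.sum_univ_two, Matrix.cons_val_zero, Matrix.cons_val_one,
      Matrix.head_cons, one_mul]
    congr 2
    · ring
    · ring
  have hι₂S : ι₂ = fun p : ℝ × ℝ × ℝ => ∑ j : Fin 4,
      (![1, 1, (A:ℂ), (A:ℂ)] j) * Complex.exp ((![-(k:ℂ), (k:ℂ), 0, 0] j) * p.1
        + (![(k:ℂ), -(k:ℂ), 0, 0] j) * p.2.1 + (![0, 0, -((k:ℂ)*pc), (k:ℂ)*pc] j) * p.2.2) := by
    funext p
    rw [hι₂]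
    simp only [hη₁, hη₂, Fin.sum_univ_four, Matrix.cons_val_zero, Matrix.cons_val_one,
      Matrix.head_cons, Matrix.cons_val_two, Matrix.tail_cons, Matrix.cons_val_three, one_mul]
    rw [show ((k:ℂ) * ((p.2.1:ℂ) - pc * (p.2.2:ℂ) - (p.1:ℂ))
          + (k:ℂ) * ((p.2.1:ℂ) + pc * (p.2.2:ℂ) - (p.1:ℂ))) / 2
        = -(k:ℂ) * (p.1:ℂ) + (k:ℂ) * (p.2.1:ℂ) + 0 * (p.2.2:ℂ) by ring]
    rw [show (-((k:ℂ) * ((p.2.1:ℂ) - pc * (p.2.2:ℂ) - (p.1:ℂ))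
          + (k:ℂ) * ((p.2.1:ℂ) + pc * (p.2.2:ℂ) - (p.1:ℂ)))) / 2
        = (k:ℂ) * (p.1:ℂ) + -(k:ℂ) * (p.2.1:ℂ) + 0 * (p.2.2:ℂ) by ring]
    rw [show ((k:ℂ) * ((p.2.1:ℂ) - pc * (p.2.2:ℂ) - (p.1:ℂ))
          - (k:ℂ) * ((p.2.1:ℂ) + pc * (p.2.2:ℂ) - (p.1:ℂ))) / 2
        = 0 * (p.1:ℂ) + 0 * (p.2.1:ℂ) + -((k:ℂ)*pc) * (p.2.2:ℂ) by ring]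
    rw [show ((k:ℂ) * ((p.2.1:ℂ) + pc * (p.2.2:ℂ) - (p.1:ℂ))
          - (k:ℂ) * ((p.2.1:ℂ) - pc * (p.2.2:ℂ) - (p.1:ℂ))) / 2
        = 0 * (p.1:ℂ) + 0 * (p.2.1:ℂ) + ((k:ℂ)*pc) * (p.2.2:ℂ) by ring]
    ring
  have hIdiv : Complex.I / ((Real.sqrt 3:ℝ):ℂ) = Complex.I * ((Real.sqrt 3:ℝ):ℂ) / 3 := by
    rw [div_eq_div_iff hs3ne (by norm_num : (3:ℂ) ≠ 0)]
    linear_combination (-Complex.I) * hSc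
  have hfac : ((1:ℂ) - (k:ℂ)^2) * (3*(4*(k:ℂ)^2-1)) ≠ 0 := by
    have h0 : ((1-k^2) * (3*(4*k^2-1)) : ℝ) ≠ 0 := by nlinarith
    have h1 := Complex.ofReal_ne_zero.mpr h0
    push_cast at h1
    convert h1 using 2 <;> ring
  have key2 : ∀ q : ℝ × ℝ × ℝ,
      hirota3 0 2 0 ι₁ ι₂ q + μs * hirota3 0 1 0 ι₁ ι₂ q
        + I / (Real.sqrt 3 : ℂ) * hirota3 0 0 1 ι₁ ι₂ q
        = lam * (ι₁ q * ι₂ q) := by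
    intro q
    rw [hι₁S, hι₂S]
    rw [hirota3_exp, hirota3_exp, hirota3_exp]
    simp only [Fin.sum_univ_two, Fin.sum_univ_four, Matrix.cons_val_zero, Matrix.cons_val_one,
      Matrix.head_cons, Matrix.cons_val_two, Matrix.tail_cons, Matrix.cons_val_three]
    set x1 := Complex.exp (-(k:ℂ)/2 * (q.1:ℂ) + (k:ℂ)/2 * (q.2.1:ℂ) + -((k:ℂ)*pc)/2 * (q.2.2:ℂ)) with hx1
    set x1p := Complex.exp ((k:ℂ)/2 * (q.1:ℂ) + -(k:ℂ)/2 * (q.2.1:ℂ) + ((k:ℂ)*pc)/2 * (q.2.2:ℂ)) with hx1p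
    set y1 := Complex.exp (-(k:ℂ)/2 * (q.1:ℂ) + (k:ℂ)/2 * (q.2.1:ℂ) + ((k:ℂ)*pc)/2 * (q.2.2:ℂ)) with hy1
    set y1p := Complex.exp ((k:ℂ)/2 * (q.1:ℂ) + -(k:ℂ)/2 * (q.2.1:ℂ) + -((k:ℂ)*pc)/2 * (q.2.2:ℂ)) with hy1p
    have e0 : Complex.exp ((-(k:ℂ)/2 + -(k:ℂ)) * (q.1:ℂ) + ((k:ℂ)/2 + (k:ℂ)) * (q.2.1:ℂ) + (-((k:ℂ)*pc)/2 + 0) * (q.2.2:ℂ)) = x1*(x1*y1) := by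
      simp only [hx1, hx1p, hy1, hy1p]
      simp only [← Complex.exp_add]
      congr 1
      ring
    have e1 : Complex.exp ((-(k:ℂ)/2 + (k:ℂ)) * (q.1:ℂ) + ((k:ℂ)/2 + -(k:ℂ)) * (q.2.1:ℂ) + (-((k:ℂ)*pc)/2 + 0) * (q.2.2:ℂ)) = x1*(x1p*y1p) := by
      simp only [hx1, hx1p, hy1, hy1p]
      simp only [← Complex.exp_add]
      congr 1
      ring
    have e2 : Complex.exp ((-(k:ℂ)/2 + 0) * (q.1:ℂ) + ((k:ℂ)/2 + 0) * (q.2.1:ℂ) + (-((k:ℂ)*pc)/2 + -((k:ℂ)*pc)) * (q.2.2:ℂ)) = x1*(x1*y1p) := by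
      simp only [hx1, hx1p, hy1, hy1p]
      simp only [← Complex.exp_add]
      congr 1
      ring
    have e3 : Complex.exp ((-(k:ℂ)/2 + 0) * (q.1:ℂ) + ((k:ℂ)/2 + 0) * (q.2.1:ℂ) + (-((k:ℂ)*pc)/2 + ((k:ℂ)*pc)) * (q.2.2:ℂ)) = x1*(x1p*y1) := by
      simp only [hx1, hx1p, hy1, hy1p]
      simp only [← Complex.exp_add]
      congr 1
      ring
    have e4 : Complex.exp (((k:ℂ)/2 + -(k:ℂ)) * (q.1:ℂ) + (-(k:ℂ)/2 + (k:ℂ)) * (q.2.1:ℂ) + (((k:ℂ)*pc)/2 + 0) * (q.2.2:ℂ)) = x1p*(x1*y1) := by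
      simp only [hx1, hx1p, hy1, hy1p]
      simp only [← Complex.exp_add]
      congr 1
      ring
    have e5 : Complex.exp (((k:ℂ)/2 + (k:ℂ)) * (q.1:ℂ) + (-(k:ℂ)/2 + -(k:ℂ)) * (q.2.1:ℂ) + (((k:ℂ)*pc)/2 + 0) * (q.2.2:ℂ)) = x1p*(x1p*y1p) := by
      simp only [hx1, hx1p, hy1, hy1p]
      simp only [← Complex.exp_add]
      congr 1
      ring
    have e6 : Complex.exp (((k:ℂ)/2 + 0) * (q.1:ℂ) + (-(k:ℂ)/2 + 0) * (q.2.1:ℂ) + (((k:ℂ)*pc)/2 + -((k:ℂ)*pc)) * (q.2.2:ℂ)) = x1p*(x1*y1p) := by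
      simp only [hx1, hx1p, hy1, hy1p]
      simp only [← Complex.exp_add]
      congr 1
      ring
    have e7 : Complex.exp (((k:ℂ)/2 + 0) * (q.1:ℂ) + (-(k:ℂ)/2 + 0) * (q.2.1:ℂ) + (((k:ℂ)*pc)/2 + ((k:ℂ)*pc)) * (q.2.2:ℂ)) = x1p*(x1p*y1) := by
      simp only [hx1, hx1p, hy1, hy1p]
      simp only [← Complex.exp_add]
      congr 1
      ring
    have e8 : Complex.exp ((-(k:ℂ)) * (q.1:ℂ) + ((k:ℂ)) * (q.2.1:ℂ) + (0) * (q.2.2:ℂ)) = x1*y1 := by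
      simp only [hx1, hx1p, hy1, hy1p]
      simp only [← Complex.exp_add]
      congr 1
      ring
    have e9 : Complex.exp (((k:ℂ)) * (q.1:ℂ) + (-(k:ℂ)) * (q.2.1:ℂ) + (0) * (q.2.2:ℂ)) = x1p*y1p := by
      simp only [hx1, hx1p, hy1, hy1p]
      simp only [← Complex.exp_add]
      congr 1
      ring
    have e10 : Complex.exp ((0) * (q.1:ℂ) + (0) * (q.2.1:ℂ) + (-((k:ℂ)*pc)) * (q.2.2:ℂ)) = x1*y1p := by
      simp only [hx1, hx1p, hy1, hy1p]
      simp only [← Complex.exp_add]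
      congr 1
      ring
    have e11 : Complex.exp ((0) * (q.1:ℂ) + (0) * (q.2.1:ℂ) + (((k:ℂ)*pc)) * (q.2.2:ℂ)) = x1p*y1 := by
      simp only [hx1, hx1p, hy1, hy1p]
      simp only [← Complex.exp_add]
      congr 1
      ring
    rw [e0, e1, e2, e3, e4, e5, e6, e7, e8, e9, e10, e11]
    rw [hμ, hlam, hIdiv, hpc]
    rw [← sub_eq_zero]
    apply mul_left_cancel₀ hfac
    linear_combination ((1/2:ℂ)*(k:ℂ)*(b:ℂ)*((Real.sqrt 3:ℝ):ℂ)*x1*x1p*y1p + (-1/6:ℂ)*(k:ℂ)*(b:ℂ)*((Real.sqrt 3:ℝ):ℂ)*x1^2*y1 + (-1/6:ℂ)*(k:ℂ)*(b:ℂ)*((Real.sqrt 3:ℝ):ℂ)*Complex.I^2*x1*x1p*y1p + (-1/6:ℂ)*(k:ℂ)*(b:ℂ)*((Real.sqrt 3:ℝ):ℂ)*Complex.I^2*x1^2*y1 + (1/6:ℂ)*(k:ℂ)*(b:ℂ)*((Real.sqrt 3:ℝ):ℂ)*(A:ℂ)*x1*x1p*y1 + (1/6:ℂ)*(k:ℂ)*(b:ℂ)*((Real.sqrt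 3:ℝ):ℂ)*(A:ℂ)*x1^2*y1p + (-1/2:ℂ)*(k:ℂ)*(b:ℂ)*((Real.sqrt 3:ℝ):ℂ)*(A:ℂ)*Complex.I^2*x1*x1p*y1 + (1/6:ℂ)*(k:ℂ)*(b:ℂ)*((Real.sqrt 3:ℝ):ℂ)*(A:ℂ)*Complex.I^2*x1^2*y1p + (2:ℂ)*(k:ℂ)^2*x1*x1p*y1p + (-1/2:ℂ)*(k:ℂ)^3*(b:ℂ)*((Real.sqrt 3:ℝ):ℂ)*x1*x1p*y1p + (1/6:ℂ)*(k:ℂ)^3*(b:ℂ)*((Real.sqrt 3:ℝ):ℂ)*x1^2*y1 + (1/6:ℂ)*(k:ℂ)^3*(b:ℂ)*((Real.sqrt 3:ℝ):ℂ)*Complex.I^2*x1*x1p*y1p + (1/6:ℂ)*(k:ℂ)^3*(b:ℂ)*((Real.sqrt 3:ℝ):ℂ)*Complex.I^2*x1^2*y1 + (-1/6:ℂ)*(k:ℂ)^3*(b:ℂ)*((Real.sqrt 3:ℝ):ℂ)*(A:ℂ)*x1*x1p*y1 + (-1/6:ℂ)*(k:ℂ)^3*(b:ℂ)*((Real.sqrt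 3:ℝ):ℂ)*(A:ℂ)*x1^2*y1p + (1/2:ℂ)*(k:ℂ)^3*(b:ℂ)*((Real.sqrt 3:ℝ):ℂ)*(A:ℂ)*Complex.I^2*x1*x1p*y1 + (-1/6:ℂ)*(k:ℂ)^3*(b:ℂ)*((Real.sqrt 3:ℝ):ℂ)*(A:ℂ)*Complex.I^2*x1^2*y1p + (-2:ℂ)*(k:ℂ)^4*x1*x1p*y1p) * hr4 + ((-1/2:ℂ)*(k:ℂ)*(b:ℂ)*((Real.sqrt 3:ℝ):ℂ)*x1p^2*y1p + (-1/2:ℂ)*(k:ℂ)*(b:ℂ)*((Real.sqrt 3:ℝ):ℂ)*x1*x1p*y1 + (1/2:ℂ)*(k:ℂ)*(b:ℂ)*((Real.sqrt 3:ℝ):ℂ)*(A:ℂ)*x1p^2*y1 + (-3/2:ℂ)*(k:ℂ)*(b:ℂ)*((Real.sqrt 3:ℝ):ℂ)*(A:ℂ)*x1*x1p*y1p + (1/6:ℂ)*(k:ℂ)*(b:ℂ)^3*((Real.sqrt 3:ℝ):ℂ)^3*(A:ℂ)*x1*x1p*y1p + (1/6:ℂ)*(k:ℂ)*(b:ℂ)^3*((Real.sqrt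 3:ℝ):ℂ)^3*(A:ℂ)*x1^2*y1 + (1/2:ℂ)*(k:ℂ)*(b:ℂ)^3*((Real.sqrt 3:ℝ):ℂ)^3*(A:ℂ)^2*x1*x1p*y1 + (-1/6:ℂ)*(k:ℂ)*(b:ℂ)^3*((Real.sqrt 3:ℝ):ℂ)^3*(A:ℂ)^2*x1^2*y1p + (-1/2:ℂ)*(k:ℂ)^2*(b:ℂ)^2*((Real.sqrt 3:ℝ):ℂ)^2*(A:ℂ)*x1*x1p*y1p + (-1/2:ℂ)*(k:ℂ)^2*(b:ℂ)^2*((Real.sqrt 3:ℝ):ℂ)^2*(A:ℂ)*x1^2*y1 + (-3/2:ℂ)*(k:ℂ)^2*(b:ℂ)^2*((Real.sqrt 3:ℝ):ℂ)^2*(A:ℂ)^2*x1*x1p*y1 + (1/2:ℂ)*(k:ℂ)^2*(b:ℂ)^2*((Real.sqrt 3:ℝ):ℂ)^2*(A:ℂ)^2*x1^2*y1p + (5/2:ℂ)*(k:ℂ)^3*(b:ℂ)*((Real.sqrt 3:ℝ):ℂ)*x1p^2*y1p + (5/2:ℂ)*(k:ℂ)^3*(b:ℂ)*((Real.sqrt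 3:ℝ):ℂ)*x1*x1p*y1 + (-5/2:ℂ)*(k:ℂ)^3*(b:ℂ)*((Real.sqrt 3:ℝ):ℂ)*(A:ℂ)*x1p^2*y1 + (15/2:ℂ)*(k:ℂ)^3*(b:ℂ)*((Real.sqrt 3:ℝ):ℂ)*(A:ℂ)*x1*x1p*y1p + (-1/6:ℂ)*(k:ℂ)^3*(b:ℂ)^3*((Real.sqrt 3:ℝ):ℂ)^3*(A:ℂ)*x1*x1p*y1p + (-1/6:ℂ)*(k:ℂ)^3*(b:ℂ)^3*((Real.sqrt 3:ℝ):ℂ)^3*(A:ℂ)*x1^2*y1 + (-1/2:ℂ)*(k:ℂ)^3*(b:ℂ)^3*((Real.sqrt 3:ℝ):ℂ)^3*(A:ℂ)^2*x1*x1p*y1 + (1/6:ℂ)*(k:ℂ)^3*(b:ℂ)^3*((Real.sqrt 3:ℝ):ℂ)^3*(A:ℂ)^2*x1^2*y1p + (1/2:ℂ)*(k:ℂ)^4*(b:ℂ)^2*((Real.sqrt 3:ℝ):ℂ)^2*(A:ℂ)*x1*x1p*y1p + (1/2:ℂ)*(k:ℂ)^4*(b:ℂ)^2*((Real.sqrt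 3:ℝ):ℂ)^2*(A:ℂ)*x1^2*y1 + (3/2:ℂ)*(k:ℂ)^4*(b:ℂ)^2*((Real.sqrt 3:ℝ):ℂ)^2*(A:ℂ)^2*x1*x1p*y1 + (-1/2:ℂ)*(k:ℂ)^4*(b:ℂ)^2*((Real.sqrt 3:ℝ):ℂ)^2*(A:ℂ)^2*x1^2*y1p + (-2:ℂ)*(k:ℂ)^5*(b:ℂ)*((Real.sqrt 3:ℝ):ℂ)*x1p^2*y1p + (-2:ℂ)*(k:ℂ)^5*(b:ℂ)*((Real.sqrt 3:ℝ):ℂ)*x1*x1p*y1 + (2:ℂ)*(k:ℂ)^5*(b:ℂ)*((Real.sqrt 3:ℝ):ℂ)*(A:ℂ)*x1p^2*y1 + (-6:ℂ)*(k:ℂ)^5*(b:ℂ)*((Real.sqrt 3:ℝ):ℂ)*(A:ℂ)*x1*x1p*y1p) * Complex.I_sq + ((-2/3:ℂ)*(k:ℂ)*(b:ℂ)^3*((Real.sqrt 3:ℝ):ℂ)*(A:ℂ)*x1*x1p*y1p + (-2/3:ℂ)*(k:ℂ)*(b:ℂ)^3*((Real.sqrt 3:ℝ):ℂ)*(A:ℂ)^2*x1*x1p*y1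 + (2:ℂ)*(k:ℂ)^2*(b:ℂ)^2*(A:ℂ)^2*x1*x1p*y1 + (2/3:ℂ)*(k:ℂ)^3*(b:ℂ)^3*((Real.sqrt 3:ℝ):ℂ)*(A:ℂ)*x1*x1p*y1p + (2/3:ℂ)*(k:ℂ)^3*(b:ℂ)^3*((Real.sqrt 3:ℝ):ℂ)*(A:ℂ)^2*x1*x1p*y1 + (-2:ℂ)*(k:ℂ)^4*(b:ℂ)^2*(A:ℂ)^2*x1*x1p*y1) * hSc + ((-2:ℂ)*(k:ℂ)*(b:ℂ)*((Real.sqrt 3:ℝ):ℂ)*(A:ℂ)*x1*x1p*y1p + (-2:ℂ)*(k:ℂ)*(b:ℂ)*((Real.sqrt 3:ℝ):ℂ)*(A:ℂ)^2*x1*x1p*y1 + (6:ℂ)*(k:ℂ)^2*(A:ℂ)^2*x1*x1p*y1 + (2:ℂ)*(k:ℂ)^3*(b:ℂ)*((Real.sqrt 3:ℝ):ℂ)*(A:ℂ)*x1*x1p*y1p + (2:ℂ)*(k:ℂ)^3*(b:ℂ)*((Real.sqrt 3:ℝ):ℂ)*(A:ℂ)^2*x1*x1p*y1 + (-6:ℂ)*(k:ℂ)^4*(A:ℂ)^2*x1*x1p*y1)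 * hBc + ((-2:ℂ)*(k:ℂ)*(b:ℂ)*((Real.sqrt 3:ℝ):ℂ)*x1*x1p*y1 + (6:ℂ)*(k:ℂ)^2*x1*x1p*y1 + (2:ℂ)*(k:ℂ)^3*(b:ℂ)*((Real.sqrt 3:ℝ):ℂ)*x1*x1p*y1 + (-6:ℂ)*(k:ℂ)^4*x1*x1p*y1) * hAc
  have key3 : ∀ q : ℝ × ℝ × ℝ,
      hirota3 1 0 0 ι₁ ι₂ q + 3 * lam * hirota3 0 1 0 ι₁ ι₂ q
        - (Real.sqrt 3 : ℂ) * μs * I * hirota3 0 0 1 ι₁ ι₂ q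
        + hirota3 0 3 0 ι₁ ι₂ q
        - (Real.sqrt 3 : ℂ) * I * hirota3 0 1 1 ι₁ ι₂ q
        - 3 * (k : ℂ) ^ 2 * μs / 4 * (ι₁ q * ι₂ q) = 0 := by
    intro q
    rw [hι₁S, hι₂S]
    rw [hirota3_exp, hirota3_exp, hirota3_exp, hirota3_exp, hirota3_exp]
    simp only [Fin.sum_univ_two, Fin.sum_univ_four, Matrix.cons_val_zero, Matrix.cons_val_one,
      Matrix.head_cons, Matrix.cons_val_two, Matrix.tail_cons, Matrix.cons_val_three]
    set x1 := Complex.exp (-(k:ℂ)/2 * (q.1:ℂ) + (k:ℂ)/2 * (q.2.1:ℂ) + -((k:ℂ)*pc)/2 * (q.2.2:ℂ)) with hx1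
    set x1p := Complex.exp ((k:ℂ)/2 * (q.1:ℂ) + -(k:ℂ)/2 * (q.2.1:ℂ) + ((k:ℂ)*pc)/2 * (q.2.2:ℂ)) with hx1p
    set y1 := Complex.exp (-(k:ℂ)/2 * (q.1:ℂ) + (k:ℂ)/2 * (q.2.1:ℂ) + ((k:ℂ)*pc)/2 * (q.2.2:ℂ)) with hy1
    set y1p := Complex.exp ((k:ℂ)/2 * (q.1:ℂ) + -(k:ℂ)/2 * (q.2.1:ℂ) + -((k:ℂ)*pc)/2 * (q.2.2:ℂ)) with hy1p
    have e0 : Complex.exp ((-(k:ℂ)/2 + -(k:ℂ)) * (q.1:ℂ) + ((k:ℂ)/2 + (k:ℂ)) * (q.2.1:ℂ) + (-((k:ℂ)*pc)/2 + 0) * (q.2.2:ℂ)) = x1*(x1*y1) := by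
      simp only [hx1, hx1p, hy1, hy1p]
      simp only [← Complex.exp_add]
      congr 1
      ring
    have e1 : Complex.exp ((-(k:ℂ)/2 + (k:ℂ)) * (q.1:ℂ) + ((k:ℂ)/2 + -(k:ℂ)) * (q.2.1:ℂ) + (-((k:ℂ)*pc)/2 + 0) * (q.2.2:ℂ)) = x1*(x1p*y1p) := by
      simp only [hx1, hx1p, hy1, hy1p]
      simp only [← Complex.exp_add]
      congr 1
      ring
    have e2 : Complex.exp ((-(k:ℂ)/2 + 0) * (q.1:ℂ) + ((k:ℂ)/2 + 0) * (q.2.1:ℂ) + (-((k:ℂ)*pc)/2 + -((k:ℂ)*pc)) * (q.2.2:ℂ)) = x1*(x1*y1p) := by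
      simp only [hx1, hx1p, hy1, hy1p]
      simp only [← Complex.exp_add]
      congr 1
      ring
    have e3 : Complex.exp ((-(k:ℂ)/2 + 0) * (q.1:ℂ) + ((k:ℂ)/2 + 0) * (q.2.1:ℂ) + (-((k:ℂ)*pc)/2 + ((k:ℂ)*pc)) * (q.2.2:ℂ)) = x1*(x1p*y1) := by
      simp only [hx1, hx1p, hy1, hy1p]
      simp only [← Complex.exp_add]
      congr 1
      ring
    have e4 : Complex.exp (((k:ℂ)/2 + -(k:ℂ)) * (q.1:ℂ) + (-(k:ℂ)/2 + (k:ℂ)) * (q.2.1:ℂ) + (((k:ℂ)*pc)/2 + 0) * (q.2.2:ℂ)) = x1p*(x1*y1) := by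
      simp only [hx1, hx1p, hy1, hy1p]
      simp only [← Complex.exp_add]
      congr 1
      ring
    have e5 : Complex.exp (((k:ℂ)/2 + (k:ℂ)) * (q.1:ℂ) + (-(k:ℂ)/2 + -(k:ℂ)) * (q.2.1:ℂ) + (((k:ℂ)*pc)/2 + 0) * (q.2.2:ℂ)) = x1p*(x1p*y1p) := by
      simp only [hx1, hx1p, hy1, hy1p]
      simp only [← Complex.exp_add]
      congr 1
      ring
    have e6 : Complex.exp (((k:ℂ)/2 + 0) * (q.1:ℂ) + (-(k:ℂ)/2 + 0) * (q.2.1:ℂ) + (((k:ℂ)*pc)/2 + -((k:ℂ)*pc)) * (q.2.2:ℂ)) = x1p*(x1*y1p) := by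
      simp only [hx1, hx1p, hy1, hy1p]
      simp only [← Complex.exp_add]
      congr 1
      ring
    have e7 : Complex.exp (((k:ℂ)/2 + 0) * (q.1:ℂ) + (-(k:ℂ)/2 + 0) * (q.2.1:ℂ) + (((k:ℂ)*pc)/2 + ((k:ℂ)*pc)) * (q.2.2:ℂ)) = x1p*(x1p*y1) := by
      simp only [hx1, hx1p, hy1, hy1p]
      simp only [← Complex.exp_add]
      congr 1
      ring
    have e8 : Complex.exp ((-(k:ℂ)) * (q.1:ℂ) + ((k:ℂ)) * (q.2.1:ℂ) + (0) * (q.2.2:ℂ)) = x1*y1 := by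
      simp only [hx1, hx1p, hy1, hy1p]
      simp only [← Complex.exp_add]
      congr 1
      ring
    have e9 : Complex.exp (((k:ℂ)) * (q.1:ℂ) + (-(k:ℂ)) * (q.2.1:ℂ) + (0) * (q.2.2:ℂ)) = x1p*y1p := by
      simp only [hx1, hx1p, hy1, hy1p]
      simp only [← Complex.exp_add]
      congr 1
      ring
    have e10 : Complex.exp ((0) * (q.1:ℂ) + (0) * (q.2.1:ℂ) + (-((k:ℂ)*pc)) * (q.2.2:ℂ)) = x1*y1p := by
      simp only [hx1, hx1p, hy1, hy1p]
      simp only [← Complex.exp_add]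
      congr 1
      ring
    have e11 : Complex.exp ((0) * (q.1:ℂ) + (0) * (q.2.1:ℂ) + (((k:ℂ)*pc)) * (q.2.2:ℂ)) = x1p*y1 := by
      simp only [hx1, hx1p, hy1, hy1p]
      simp only [← Complex.exp_add]
      congr 1
      ring
    rw [e0, e1, e2, e3, e4, e5, e6, e7, e8, e9, e10, e11]
    rw [hμ, hlam, hpc]
    apply mul_left_cancel₀ hfac
    linear_combination ((-3/2:ℂ)*(k:ℂ)*x1*x1p*y1p + (1/2:ℂ)*(k:ℂ)*x1^2*y1 + (-1/2:ℂ)*(k:ℂ)*(A:ℂ)*x1*x1p*y1 + (-1/2:ℂ)*(k:ℂ)*(A:ℂ)*x1^2*y1p + (1/6:ℂ)*(k:ℂ)*(b:ℂ)^2*((Real.sqrt 3:ℝ):ℂ)^2*Complex.I^2*x1*x1p*y1p + (1/6:ℂ)*(k:ℂ)*(b:ℂ)^2*((Real.sqrt 3:ℝ):ℂ)^2*Complex.I^2*x1^2*y1 + (1/2:ℂ)*(k:ℂ)*(b:ℂ)^2*((Real.sqrt 3:ℝ):ℂ)^2*(A:ℂ)*Complex.I^2*x1*x1p*y1 + (-1/6:ℂ)*(k:ℂ)*(b:ℂ)^2*((Real.sqrt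 3:ℝ):ℂ)^2*(A:ℂ)*Complex.I^2*x1^2*y1p + (-1/4:ℂ)*(k:ℂ)^2*(b:ℂ)*((Real.sqrt 3:ℝ):ℂ)*x1*x1p*y1p + (-1/4:ℂ)*(k:ℂ)^2*(b:ℂ)*((Real.sqrt 3:ℝ):ℂ)*x1^2*y1 + (3/4:ℂ)*(k:ℂ)^2*(b:ℂ)*((Real.sqrt 3:ℝ):ℂ)*Complex.I^2*x1*x1p*y1p + (-1/4:ℂ)*(k:ℂ)^2*(b:ℂ)*((Real.sqrt 3:ℝ):ℂ)*Complex.I^2*x1^2*y1 + (-1/4:ℂ)*(k:ℂ)^2*(b:ℂ)*((Real.sqrt 3:ℝ):ℂ)*(A:ℂ)*x1*x1p*y1 + (-1/4:ℂ)*(k:ℂ)^2*(b:ℂ)*((Real.sqrt 3:ℝ):ℂ)*(A:ℂ)*x1^2*y1p + (3/4:ℂ)*(k:ℂ)^2*(b:ℂ)*((Real.sqrt 3:ℝ):ℂ)*(A:ℂ)*Complex.I^2*x1*x1p*y1 + (-1/4:ℂ)*(k:ℂ)^2*(b:ℂ)*((Real.sqrt 3:ℝ):ℂ)*(A:ℂ)*Complex.I^2*x1^2*y1p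 + (6:ℂ)*(k:ℂ)^3*x1*x1p*y1p + (-1:ℂ)*(k:ℂ)^3*x1^2*y1 + (k:ℂ)^3*(A:ℂ)*x1*x1p*y1 + (k:ℂ)^3*(A:ℂ)*x1^2*y1p + (-1/6:ℂ)*(k:ℂ)^3*(b:ℂ)^2*((Real.sqrt 3:ℝ):ℂ)^2*Complex.I^2*x1*x1p*y1p + (-1/6:ℂ)*(k:ℂ)^3*(b:ℂ)^2*((Real.sqrt 3:ℝ):ℂ)^2*Complex.I^2*x1^2*y1 + (-1/2:ℂ)*(k:ℂ)^3*(b:ℂ)^2*((Real.sqrt 3:ℝ):ℂ)^2*(A:ℂ)*Complex.I^2*x1*x1p*y1 + (1/6:ℂ)*(k:ℂ)^3*(b:ℂ)^2*((Real.sqrt 3:ℝ):ℂ)^2*(A:ℂ)*Complex.I^2*x1^2*y1p + (1/4:ℂ)*(k:ℂ)^4*(b:ℂ)*((Real.sqrt 3:ℝ):ℂ)*x1*x1p*y1p + (1/4:ℂ)*(k:ℂ)^4*(b:ℂ)*((Real.sqrt 3:ℝ):ℂ)*x1^2*y1 + (-3/4:ℂ)*(k:ℂ)^4*(b:ℂ)*((Real.sqrt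 3:ℝ):ℂ)*Complex.I^2*x1*x1p*y1p + (1/4:ℂ)*(k:ℂ)^4*(b:ℂ)*((Real.sqrt 3:ℝ):ℂ)*Complex.I^2*x1^2*y1 + (1/4:ℂ)*(k:ℂ)^4*(b:ℂ)*((Real.sqrt 3:ℝ):ℂ)*(A:ℂ)*x1*x1p*y1 + (1/4:ℂ)*(k:ℂ)^4*(b:ℂ)*((Real.sqrt 3:ℝ):ℂ)*(A:ℂ)*x1^2*y1p + (-3/4:ℂ)*(k:ℂ)^4*(b:ℂ)*((Real.sqrt 3:ℝ):ℂ)*(A:ℂ)*Complex.I^2*x1*x1p*y1 + (1/4:ℂ)*(k:ℂ)^4*(b:ℂ)*((Real.sqrt 3:ℝ):ℂ)*(A:ℂ)*Complex.I^2*x1^2*y1p + (-9/2:ℂ)*(k:ℂ)^5*x1*x1p*y1p + (1/2:ℂ)*(k:ℂ)^5*x1^2*y1 + (-1/2:ℂ)*(k:ℂ)^5*(A:ℂ)*x1*x1p*y1 + (-1/2:ℂ)*(k:ℂ)^5*(A:ℂ)*x1^2*y1p) * hr4 + ((1/2:ℂ)*(k:ℂ)*(b:ℂ)^2*((Real.sqrt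 3:ℝ):ℂ)^2*x1p^2*y1p + (1/2:ℂ)*(k:ℂ)*(b:ℂ)^2*((Real.sqrt 3:ℝ):ℂ)^2*x1*x1p*y1 + (-1/2:ℂ)*(k:ℂ)*(b:ℂ)^2*((Real.sqrt 3:ℝ):ℂ)^2*(A:ℂ)*x1p^2*y1 + (3/2:ℂ)*(k:ℂ)*(b:ℂ)^2*((Real.sqrt 3:ℝ):ℂ)^2*(A:ℂ)*x1*x1p*y1p + (-1/6:ℂ)*(k:ℂ)*(b:ℂ)^4*((Real.sqrt 3:ℝ):ℂ)^4*(A:ℂ)*x1*x1p*y1p + (-1/6:ℂ)*(k:ℂ)*(b:ℂ)^4*((Real.sqrt 3:ℝ):ℂ)^4*(A:ℂ)*x1^2*y1 + (-1/2:ℂ)*(k:ℂ)*(b:ℂ)^4*((Real.sqrt 3:ℝ):ℂ)^4*(A:ℂ)^2*x1*x1p*y1 + (1/6:ℂ)*(k:ℂ)*(b:ℂ)^4*((Real.sqrt 3:ℝ):ℂ)^4*(A:ℂ)^2*x1^2*y1p + (3/4:ℂ)*(k:ℂ)^2*(b:ℂ)*((Real.sqrt 3:ℝ):ℂ)*x1p^2*y1p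 + (-9/4:ℂ)*(k:ℂ)^2*(b:ℂ)*((Real.sqrt 3:ℝ):ℂ)*x1*x1p*y1 + (3/4:ℂ)*(k:ℂ)^2*(b:ℂ)*((Real.sqrt 3:ℝ):ℂ)*(A:ℂ)*x1p^2*y1 + (-9/4:ℂ)*(k:ℂ)^2*(b:ℂ)*((Real.sqrt 3:ℝ):ℂ)*(A:ℂ)*x1*x1p*y1p + (-1/4:ℂ)*(k:ℂ)^2*(b:ℂ)^3*((Real.sqrt 3:ℝ):ℂ)^3*(A:ℂ)*x1*x1p*y1p + (3/4:ℂ)*(k:ℂ)^2*(b:ℂ)^3*((Real.sqrt 3:ℝ):ℂ)^3*(A:ℂ)*x1^2*y1 + (3/4:ℂ)*(k:ℂ)^2*(b:ℂ)^3*((Real.sqrt 3:ℝ):ℂ)^3*(A:ℂ)^2*x1*x1p*y1 + (-1/4:ℂ)*(k:ℂ)^2*(b:ℂ)^3*((Real.sqrt 3:ℝ):ℂ)^3*(A:ℂ)^2*x1^2*y1p + (-5/2:ℂ)*(k:ℂ)^3*(b:ℂ)^2*((Real.sqrt 3:ℝ):ℂ)^2*x1p^2*y1p + (-5/2:ℂ)*(k:ℂ)^3*(b:ℂ)^2*((Real.sqrt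 3:ℝ):ℂ)^2*x1*x1p*y1 + (5/2:ℂ)*(k:ℂ)^3*(b:ℂ)^2*((Real.sqrt 3:ℝ):ℂ)^2*(A:ℂ)*x1p^2*y1 + (-21/4:ℂ)*(k:ℂ)^3*(b:ℂ)^2*((Real.sqrt 3:ℝ):ℂ)^2*(A:ℂ)*x1*x1p*y1p + (-3/4:ℂ)*(k:ℂ)^3*(b:ℂ)^2*((Real.sqrt 3:ℝ):ℂ)^2*(A:ℂ)*x1^2*y1 + (9/4:ℂ)*(k:ℂ)^3*(b:ℂ)^2*((Real.sqrt 3:ℝ):ℂ)^2*(A:ℂ)^2*x1*x1p*y1 + (-3/4:ℂ)*(k:ℂ)^3*(b:ℂ)^2*((Real.sqrt 3:ℝ):ℂ)^2*(A:ℂ)^2*x1^2*y1p + (1/6:ℂ)*(k:ℂ)^3*(b:ℂ)^4*((Real.sqrt 3:ℝ):ℂ)^4*(A:ℂ)*x1*x1p*y1p + (1/6:ℂ)*(k:ℂ)^3*(b:ℂ)^4*((Real.sqrt 3:ℝ):ℂ)^4*(A:ℂ)*x1^2*y1 + (1/2:ℂ)*(k:ℂ)^3*(b:ℂ)^4*((Real.sqrt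 3:ℝ):ℂ)^4*(A:ℂ)^2*x1*x1p*y1 + (-1/6:ℂ)*(k:ℂ)^3*(b:ℂ)^4*((Real.sqrt 3:ℝ):ℂ)^4*(A:ℂ)^2*x1^2*y1p + (-15/4:ℂ)*(k:ℂ)^4*(b:ℂ)*((Real.sqrt 3:ℝ):ℂ)*x1p^2*y1p + (45/4:ℂ)*(k:ℂ)^4*(b:ℂ)*((Real.sqrt 3:ℝ):ℂ)*x1*x1p*y1 + (-15/4:ℂ)*(k:ℂ)^4*(b:ℂ)*((Real.sqrt 3:ℝ):ℂ)*(A:ℂ)*x1p^2*y1 + (45/4:ℂ)*(k:ℂ)^4*(b:ℂ)*((Real.sqrt 3:ℝ):ℂ)*(A:ℂ)*x1*x1p*y1p + (1/4:ℂ)*(k:ℂ)^4*(b:ℂ)^3*((Real.sqrt 3:ℝ):ℂ)^3*(A:ℂ)*x1*x1p*y1p + (-3/4:ℂ)*(k:ℂ)^4*(b:ℂ)^3*((Real.sqrt 3:ℝ):ℂ)^3*(A:ℂ)*x1^2*y1 + (-3/4:ℂ)*(k:ℂ)^4*(b:ℂ)^3*((Real.sqrt 3:ℝ):ℂ)^3*(A:ℂ)^2*x1*x1p*y1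 + (1/4:ℂ)*(k:ℂ)^4*(b:ℂ)^3*((Real.sqrt 3:ℝ):ℂ)^3*(A:ℂ)^2*x1^2*y1p + (2:ℂ)*(k:ℂ)^5*(b:ℂ)^2*((Real.sqrt 3:ℝ):ℂ)^2*x1p^2*y1p + (2:ℂ)*(k:ℂ)^5*(b:ℂ)^2*((Real.sqrt 3:ℝ):ℂ)^2*x1*x1p*y1 + (-2:ℂ)*(k:ℂ)^5*(b:ℂ)^2*((Real.sqrt 3:ℝ):ℂ)^2*(A:ℂ)*x1p^2*y1 + (15/4:ℂ)*(k:ℂ)^5*(b:ℂ)^2*((Real.sqrt 3:ℝ):ℂ)^2*(A:ℂ)*x1*x1p*y1p + (3/4:ℂ)*(k:ℂ)^5*(b:ℂ)^2*((Real.sqrt 3:ℝ):ℂ)^2*(A:ℂ)*x1^2*y1 + (-9/4:ℂ)*(k:ℂ)^5*(b:ℂ)^2*((Real.sqrt 3:ℝ):ℂ)^2*(A:ℂ)^2*x1*x1p*y1 + (3/4:ℂ)*(k:ℂ)^5*(b:ℂ)^2*((Real.sqrt 3:ℝ):ℂ)^2*(A:ℂ)^2*x1^2*y1p + (3:ℂ)*(k:ℂ)^6*(b:ℂ)*((Real.sqrt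 3:ℝ):ℂ)*x1p^2*y1p + (-9:ℂ)*(k:ℂ)^6*(b:ℂ)*((Real.sqrt 3:ℝ):ℂ)*x1*x1p*y1 + (3:ℂ)*(k:ℂ)^6*(b:ℂ)*((Real.sqrt 3:ℝ):ℂ)*(A:ℂ)*x1p^2*y1 + (-9:ℂ)*(k:ℂ)^6*(b:ℂ)*((Real.sqrt 3:ℝ):ℂ)*(A:ℂ)*x1*x1p*y1p) * Complex.I_sq + ((-1/2:ℂ)*(k:ℂ)*(b:ℂ)^2*x1p^2*y1p + (-1/2:ℂ)*(k:ℂ)*(b:ℂ)^2*x1*x1p*y1 + (1/2:ℂ)*(k:ℂ)*(b:ℂ)^2*(A:ℂ)*x1p^2*y1 + (-1/2:ℂ)*(k:ℂ)*(b:ℂ)^2*(A:ℂ)*x1^2*y1 + (1/2:ℂ)*(k:ℂ)*(b:ℂ)^2*(A:ℂ)^2*x1*x1p*y1 + (1/2:ℂ)*(k:ℂ)*(b:ℂ)^2*(A:ℂ)^2*x1^2*y1p + (1/2:ℂ)*(k:ℂ)*(b:ℂ)^4*(A:ℂ)*x1*x1p*y1p + (1/2:ℂ)*(k:ℂ)*(b:ℂ)^4*(A:ℂ)*x1^2*y1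 + (3/2:ℂ)*(k:ℂ)*(b:ℂ)^4*(A:ℂ)^2*x1*x1p*y1 + (-1/2:ℂ)*(k:ℂ)*(b:ℂ)^4*(A:ℂ)^2*x1^2*y1p + (1/6:ℂ)*(k:ℂ)*(b:ℂ)^4*((Real.sqrt 3:ℝ):ℂ)^2*(A:ℂ)*x1*x1p*y1p + (1/6:ℂ)*(k:ℂ)*(b:ℂ)^4*((Real.sqrt 3:ℝ):ℂ)^2*(A:ℂ)*x1^2*y1 + (1/2:ℂ)*(k:ℂ)*(b:ℂ)^4*((Real.sqrt 3:ℝ):ℂ)^2*(A:ℂ)^2*x1*x1p*y1 + (-1/6:ℂ)*(k:ℂ)*(b:ℂ)^4*((Real.sqrt 3:ℝ):ℂ)^2*(A:ℂ)^2*x1^2*y1p + (1/2:ℂ)*(k:ℂ)^2*(b:ℂ)^3*((Real.sqrt 3:ℝ):ℂ)*(A:ℂ)*x1*x1p*y1p + (-1/2:ℂ)*(k:ℂ)^2*(b:ℂ)^3*((Real.sqrt 3:ℝ):ℂ)*(A:ℂ)*x1^2*y1 + (-1/2:ℂ)*(k:ℂ)^2*(b:ℂ)^3*((Real.sqrt 3:ℝ):ℂ)*(A:ℂ)^2*x1*x1p*y1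 + (1/2:ℂ)*(k:ℂ)^2*(b:ℂ)^3*((Real.sqrt 3:ℝ):ℂ)*(A:ℂ)^2*x1^2*y1p + (5/2:ℂ)*(k:ℂ)^3*(b:ℂ)^2*x1p^2*y1p + (5/2:ℂ)*(k:ℂ)^3*(b:ℂ)^2*x1*x1p*y1 + (-5/2:ℂ)*(k:ℂ)^3*(b:ℂ)^2*(A:ℂ)*x1p^2*y1 + (-3/2:ℂ)*(k:ℂ)^3*(b:ℂ)^2*(A:ℂ)*x1*x1p*y1p + (k:ℂ)^3*(b:ℂ)^2*(A:ℂ)*x1^2*y1 + (-4:ℂ)*(k:ℂ)^3*(b:ℂ)^2*(A:ℂ)^2*x1*x1p*y1 + (-1:ℂ)*(k:ℂ)^3*(b:ℂ)^2*(A:ℂ)^2*x1^2*y1p + (-1/2:ℂ)*(k:ℂ)^3*(b:ℂ)^4*(A:ℂ)*x1*x1p*y1p + (-1/2:ℂ)*(k:ℂ)^3*(b:ℂ)^4*(A:ℂ)*x1^2*y1 + (-3/2:ℂ)*(k:ℂ)^3*(b:ℂ)^4*(A:ℂ)^2*x1*x1p*y1 + (1/2:ℂ)*(k:ℂ)^3*(b:ℂ)^4*(A:ℂ)^2*x1^2*y1p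 + (-1/6:ℂ)*(k:ℂ)^3*(b:ℂ)^4*((Real.sqrt 3:ℝ):ℂ)^2*(A:ℂ)*x1*x1p*y1p + (-1/6:ℂ)*(k:ℂ)^3*(b:ℂ)^4*((Real.sqrt 3:ℝ):ℂ)^2*(A:ℂ)*x1^2*y1 + (-1/2:ℂ)*(k:ℂ)^3*(b:ℂ)^4*((Real.sqrt 3:ℝ):ℂ)^2*(A:ℂ)^2*x1*x1p*y1 + (1/6:ℂ)*(k:ℂ)^3*(b:ℂ)^4*((Real.sqrt 3:ℝ):ℂ)^2*(A:ℂ)^2*x1^2*y1p + (-1/2:ℂ)*(k:ℂ)^4*(b:ℂ)^3*((Real.sqrt 3:ℝ):ℂ)*(A:ℂ)*x1*x1p*y1p + (1/2:ℂ)*(k:ℂ)^4*(b:ℂ)^3*((Real.sqrt 3:ℝ):ℂ)*(A:ℂ)*x1^2*y1 + (1/2:ℂ)*(k:ℂ)^4*(b:ℂ)^3*((Real.sqrt 3:ℝ):ℂ)*(A:ℂ)^2*x1*x1p*y1 + (-1/2:ℂ)*(k:ℂ)^4*(b:ℂ)^3*((Real.sqrt 3:ℝ):ℂ)*(A:ℂ)^2*x1^2*y1p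 + (-2:ℂ)*(k:ℂ)^5*(b:ℂ)^2*x1p^2*y1p + (-2:ℂ)*(k:ℂ)^5*(b:ℂ)^2*x1*x1p*y1 + (2:ℂ)*(k:ℂ)^5*(b:ℂ)^2*(A:ℂ)*x1p^2*y1 + (3/2:ℂ)*(k:ℂ)^5*(b:ℂ)^2*(A:ℂ)*x1*x1p*y1p + (-1/2:ℂ)*(k:ℂ)^5*(b:ℂ)^2*(A:ℂ)*x1^2*y1 + (7/2:ℂ)*(k:ℂ)^5*(b:ℂ)^2*(A:ℂ)^2*x1*x1p*y1 + (1/2:ℂ)*(k:ℂ)^5*(b:ℂ)^2*(A:ℂ)^2*x1^2*y1p) * hSc + ((-3/2:ℂ)*(k:ℂ)*x1p^2*y1p + (-3/2:ℂ)*(k:ℂ)*x1*x1p*y1 + (3/2:ℂ)*(k:ℂ)*(A:ℂ)*x1p^2*y1 + (3/2:ℂ)*(k:ℂ)*(A:ℂ)*x1*x1p*y1p + (6:ℂ)*(k:ℂ)*(A:ℂ)^2*x1*x1p*y1 + (3/2:ℂ)*(k:ℂ)*(b:ℂ)^2*(A:ℂ)*x1*x1p*y1p + (3/2:ℂ)*(k:ℂ)*(b:ℂ)^2*(A:ℂ)*x1^2*y1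 + (9/2:ℂ)*(k:ℂ)*(b:ℂ)^2*(A:ℂ)^2*x1*x1p*y1 + (-3/2:ℂ)*(k:ℂ)*(b:ℂ)^2*(A:ℂ)^2*x1^2*y1p + (3/2:ℂ)*(k:ℂ)^2*(b:ℂ)*((Real.sqrt 3:ℝ):ℂ)*(A:ℂ)*x1*x1p*y1p + (-3/2:ℂ)*(k:ℂ)^2*(b:ℂ)*((Real.sqrt 3:ℝ):ℂ)*(A:ℂ)*x1^2*y1 + (-3/2:ℂ)*(k:ℂ)^2*(b:ℂ)*((Real.sqrt 3:ℝ):ℂ)*(A:ℂ)^2*x1*x1p*y1 + (3/2:ℂ)*(k:ℂ)^2*(b:ℂ)*((Real.sqrt 3:ℝ):ℂ)*(A:ℂ)^2*x1^2*y1p + (15/2:ℂ)*(k:ℂ)^3*x1p^2*y1p + (15/2:ℂ)*(k:ℂ)^3*x1*x1p*y1 + (-15/2:ℂ)*(k:ℂ)^3*(A:ℂ)*x1p^2*y1 + (-15/2:ℂ)*(k:ℂ)^3*(A:ℂ)*x1*x1p*y1p + (-21:ℂ)*(k:ℂ)^3*(A:ℂ)^2*x1*x1p*y1 + (-3/2:ℂ)*(k:ℂ)^3*(b:ℂ)^2*(A:ℂ)*x1*x1p*y1p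 + (-3/2:ℂ)*(k:ℂ)^3*(b:ℂ)^2*(A:ℂ)*x1^2*y1 + (-9/2:ℂ)*(k:ℂ)^3*(b:ℂ)^2*(A:ℂ)^2*x1*x1p*y1 + (3/2:ℂ)*(k:ℂ)^3*(b:ℂ)^2*(A:ℂ)^2*x1^2*y1p + (-3/2:ℂ)*(k:ℂ)^4*(b:ℂ)*((Real.sqrt 3:ℝ):ℂ)*(A:ℂ)*x1*x1p*y1p + (3/2:ℂ)*(k:ℂ)^4*(b:ℂ)*((Real.sqrt 3:ℝ):ℂ)*(A:ℂ)*x1^2*y1 + (3/2:ℂ)*(k:ℂ)^4*(b:ℂ)*((Real.sqrt 3:ℝ):ℂ)*(A:ℂ)^2*x1*x1p*y1 + (-3/2:ℂ)*(k:ℂ)^4*(b:ℂ)*((Real.sqrt 3:ℝ):ℂ)*(A:ℂ)^2*x1^2*y1p + (-6:ℂ)*(k:ℂ)^5*x1p^2*y1p + (-6:ℂ)*(k:ℂ)^5*x1*x1p*y1 + (6:ℂ)*(k:ℂ)^5*(A:ℂ)*x1p^2*y1 + (6:ℂ)*(k:ℂ)^5*(A:ℂ)*x1*x1p*y1p + (15:ℂ)*(k:ℂ)^5*(A:ℂ)^2*x1*x1p*y1)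 * hBc + ((6:ℂ)*(k:ℂ)*x1*x1p*y1 + (-3:ℂ)*(k:ℂ)^2*(b:ℂ)*((Real.sqrt 3:ℝ):ℂ)*x1*x1p*y1 + (-21:ℂ)*(k:ℂ)^3*x1*x1p*y1 + (3:ℂ)*(k:ℂ)^4*(b:ℂ)*((Real.sqrt 3:ℝ):ℂ)*x1*x1p*y1 + (15:ℂ)*(k:ℂ)^5*x1*x1p*y1) * hAc
  have key1 : ∀ q : ℝ × ℝ × ℝ,
      ι₂ q = 2 * (Complex.cosh ((k : ℂ) * ((q.2.1 : ℂ) - (q.1 : ℂ)))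
        + (A : ℂ) * Complex.cos ((k : ℂ) * (b : ℂ) * (q.2.2 : ℂ))) := by
    intro q
    rw [hι₂]
    simp only [hη₁, hη₂, hpc, Complex.cosh, Complex.cos]
    rw [show ((k:ℂ) * ((q.2.1:ℂ) - (b:ℂ) * Complex.I * (q.2.2:ℂ) - (q.1:ℂ))
          + (k:ℂ) * ((q.2.1:ℂ) + (b:ℂ) * Complex.I * (q.2.2:ℂ) - (q.1:ℂ))) / 2
        = (k:ℂ) * ((q.2.1:ℂ) - (q.1:ℂ)) by ring]
    rw [show (-((k:ℂ) * ((q.2.1:ℂ) - (b:ℂ) * Complex.I * (q.2.2:ℂ) - (q.1:ℂ))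
          + (k:ℂ) * ((q.2.1:ℂ) + (b:ℂ) * Complex.I * (q.2.2:ℂ) - (q.1:ℂ)))) / 2
        = -((k:ℂ) * ((q.2.1:ℂ) - (q.1:ℂ))) by ring]
    rw [show ((k:ℂ) * ((q.2.1:ℂ) - (b:ℂ) * Complex.I * (q.2.2:ℂ) - (q.1:ℂ))
          - (k:ℂ) * ((q.2.1:ℂ) + (b:ℂ) * Complex.I * (q.2.2:ℂ) - (q.1:ℂ))) / 2
        = -((k:ℂ) * (b:ℂ) * (q.2.2:ℂ)) * Complex.I by ring]
    rw [show ((k:ℂ) * ((q.2.1:ℂ) + (b:ℂ) * Complex.I * (q.2.2:ℂ) - (q.1:ℂ))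
          - (k:ℂ) * ((q.2.1:ℂ) - (b:ℂ) * Complex.I * (q.2.2:ℂ) - (q.1:ℂ))) / 2
        = (k:ℂ) * (b:ℂ) * (q.2.2:ℂ) * Complex.I by ring]
    ring
  exact ⟨key1, key2, key3⟩
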